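/- Let U_1, ..., U_{q+1} be i.i.d. uniform random variables on [0,1] and W_i = 2 - 3|U_{i+1} - U_i| - 6 U_i(1 - U_i) for 1 ≤ i ≤ q. Then the variance of (1/√q) · Σ_{i=1}^q W_i equals 2/5 + 1/(10q). -/

import Mathlib

open MeasureTheory ProbabilityTheory Set

section AuxAnalysis

lemma poly_hasDeriv (a b c d e x : ℝ) :
    HasDerivAt (fun t => a*t + b*t^2/2 + c*t^3/3 + d*t^4/4 + e*t^5/5)
      (a + b*x + c*x^2 + d*x^3 + e*x^4) x := by
  have h : HasDerivAt (fun t : ℝ => a*t + b*t^2/2 + c*t^3/3 + d*t^4/4 + e*t^5/5)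
      (a*1 + b*((2:ℕ)*x^(2-1))/2 + c*((3:ℕ)*x^(3-1))/3 + d*((4:ℕ)*x^(4-1))/4
        + e*((5:ℕ)*x^(5-1))/5) x := by
    exact (((((hasDerivAt_id x).const_mul a).add
      (((hasDerivAt_pow 2 x).const_mul b).div_const 2)).add
      (((hasDerivAt_pow 3 x).const_mul c).div_const 3)).add
      (((hasDerivAt_pow 4 x).const_mul d).div_const 4)).add
      (((hasDerivAt_pow 5 x).const_mul e).div_const 5)
  convert h using 1
  push_cast
  ring

lemma poly_int (lo hi a b c d e : ℝ) :
    ∫ x in lo..hi, (a + b*x + c*x^2 + d*x^3 + e*x^4) =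
      (a*hi + b*hi^2/2 + c*hi^3/3 + d*hi^4/4 + e*hi^5/5)
        - (a*lo + b*lo^2/2 + c*lo^3/3 + d*lo^4/4 + e*lo^5/5) := by
  apply intervalIntegral.integral_eq_sub_of_hasDerivAt
    (fun x _ => poly_hasDeriv a b c d e x)
  apply Continuous.intervalIntegrable
  continuity

lemma cabs (c : ℝ) : Continuous fun y : ℝ => |y - c| :=
  (continuous_id.sub continuous_const).abs

lemma abs_int {x : ℝ} (hx : x ∈ Icc (0:ℝ) 1) :
    ∫ y in (0:ℝ)..1, |y - x| = x^2 - x + 1/2 := by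
  obtain ⟨h0, h1⟩ := hx
  have i1 : IntervalIntegrable (fun y => |y - x|) volume 0 x :=
    (cabs x).intervalIntegrable _ _
  have i2 : IntervalIntegrable (fun y => |y - x|) volume x 1 :=
    (cabs x).intervalIntegrable _ _
  rw [← intervalIntegral.integral_add_adjacent_intervals i1 i2]
  have e1 : ∫ y in (0:ℝ)..x, |y - x| = ∫ y in (0:ℝ)..x, (x + (-1)*y + 0*y^2 + 0*y^3 + 0*y^4) := by
    apply intervalIntegral.integral_congr
    intro y hy
    rw [Set.uIcc_of_le h0] at hy
    dsimp only
    rw [abs_of_nonpos (by linarith [hy.2])]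
    ring
  have e2 : ∫ y in x..(1:ℝ), |y - x| = ∫ y in x..(1:ℝ), (-x + 1*y + 0*y^2 + 0*y^3 + 0*y^4) := by
    apply intervalIntegral.integral_congr
    intro y hy
    rw [Set.uIcc_of_le h1] at hy
    dsimp only
    rw [abs_of_nonneg (by linarith [hy.1])]
    ring
  rw [e1, e2, poly_int, poly_int]
  ring

lemma sq_int (x : ℝ) :
    ∫ y in (0:ℝ)..1, (y - x)^2 = x^2 - x + 1/3 := by
  have e : ∫ y in (0:ℝ)..1, (y - x)^2
      = ∫ y in (0:ℝ)..1, (x^2 + (-2*x)*y + 1*y^2 + 0*y^3 + 0*y^4) := by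
    apply intervalIntegral.integral_congr; intro y _; dsimp only; ring
  rw [e, poly_int]; ring

lemma inner_snd {x : ℝ} (hx : x ∈ Icc (0:ℝ) 1) :
    ∫ y in (0:ℝ)..1, (2 - 3*|y - x| - 6*x*(1-x)) = 3*x^2 - 3*x + 1/2 := by
  have i1 : IntervalIntegrable (fun y : ℝ => (2:ℝ) - 6*x*(1-x)) volume 0 1 :=
    intervalIntegrable_const
  have i2 : IntervalIntegrable (fun y => 3*|y - x|) volume 0 1 :=
    (continuous_const.mul (cabs x)).intervalIntegrable _ _
  have e : ∫ y in (0:ℝ)..1, (2 - 3*|y - x| - 6*x*(1-x))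
      = ∫ y in (0:ℝ)..1, ((2 - 6*x*(1-x)) - 3*|y - x|) := by
    apply intervalIntegral.integral_congr; intro y _; dsimp only; ring
  rw [e, intervalIntegral.integral_sub i1 i2, intervalIntegral.integral_const,
    intervalIntegral.integral_const_mul, abs_int hx]
  simp only [smul_eq_mul]
  ring

lemma inner_fst {y : ℝ} (hy : y ∈ Icc (0:ℝ) 1) :
    ∫ x in (0:ℝ)..1, (2 - 3*|y - x| - 6*x*(1-x)) = -(3*y^2 - 3*y + 1/2) := by
  have e : ∫ x in (0:ℝ)..1, (2 - 3*|y - x| - 6*x*(1-x))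
      = ∫ x in (0:ℝ)..1, ((2 + (6:ℝ)*x^2 - 6*x) - 3*|x - y|) := by
    apply intervalIntegral.integral_congr; intro x _
    dsimp only
    rw [abs_sub_comm]; ring
  have i1 : IntervalIntegrable (fun x : ℝ => (2:ℝ) + 6*x^2 - 6*x) volume 0 1 := by
    apply Continuous.intervalIntegrable; continuity
  have i2 : IntervalIntegrable (fun x => 3*|x - y|) volume 0 1 :=
    (continuous_const.mul (cabs y)).intervalIntegrable _ _
  rw [e, intervalIntegral.integral_sub i1 i2, intervalIntegral.integral_const_mul, abs_int hy]
  have e2 : ∫ x in (0:ℝ)..1, ((2:ℝ) + 6*x^2 - 6*x)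
      = ∫ x in (0:ℝ)..1, (2 + (-6)*x + 6*x^2 + 0*x^3 + 0*x^4) := by
    apply intervalIntegral.integral_congr; intro x _; dsimp only; ring
  rw [e2, poly_int]; ring

lemma inner_sq {x : ℝ} (hx : x ∈ Icc (0:ℝ) 1) :
    ∫ y in (0:ℝ)..1, (2 - 3*|y - x| - 6*x*(1-x))^2 = (2 - 6*x*(1-x))/2 := by
  have e : ∫ y in (0:ℝ)..1, (2 - 3*|y - x| - 6*x*(1-x))^2
      = ∫ y in (0:ℝ)..1, (((2 - 6*x*(1-x))^2 + 9*(y-x)^2) - (6*(2 - 6*x*(1-x)))*|y - x|) := by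
    apply intervalIntegral.integral_congr; intro y _
    dsimp only
    linear_combination (9:ℝ) * sq_abs (y - x)
  have i1 : IntervalIntegrable (fun y : ℝ => (2 - 6*x*(1-x))^2 + 9*(y-x)^2) volume 0 1 := by
    apply Continuous.intervalIntegrable; continuity
  have i2 : IntervalIntegrable (fun y => (6*(2 - 6*x*(1-x)))*|y - x|) volume 0 1 :=
    (continuous_const.mul (cabs x)).intervalIntegrable _ _
  have i3 : IntervalIntegrable (fun y : ℝ => (9:ℝ)*(y-x)^2) volume 0 1 := by
    apply Continuous.intervalIntegrable; continuity
  rw [e, intervalIntegral.integral_sub i1 i2, intervalIntegral.integral_add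
    intervalIntegrable_const i3, intervalIntegral.integral_const,
    intervalIntegral.integral_const_mul, intervalIntegral.integral_const_mul,
    abs_int hx, sq_int]
  simp only [smul_eq_mul]
  ring

lemma cov_int : ∫ y in (0:ℝ)..1, (-(3*y^2 - 3*y + 1/2) * (3*y^2 - 3*y + 1/2)) = -(1/20) := by
  have e : ∫ y in (0:ℝ)..1, (-(3*y^2 - 3*y + 1/2) * (3*y^2 - 3*y + 1/2))
      = ∫ y in (0:ℝ)..1, (-(1/4) + 3*y + (-12)*y^2 + 18*y^3 + (-9)*y^4) := by
    apply intervalIntegral.integral_congr; intro y _; dsimp only; ring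
  rw [e, poly_int]; norm_num

lemma outer_mean : ∫ x in (0:ℝ)..1, (3*x^2 - 3*x + 1/2) = 0 := by
  have e : ∫ x in (0:ℝ)..1, (3*x^2 - 3*x + 1/2)
      = ∫ x in (0:ℝ)..1, (1/2 + (-3)*x + 3*x^2 + 0*x^3 + 0*x^4) := by
    apply intervalIntegral.integral_congr; intro x _; dsimp only; ring
  rw [e, poly_int]; norm_num

lemma outer_sq : ∫ x in (0:ℝ)..1, ((2 - 6*x*(1-x))/2) = 1/2 := by
  have e : ∫ x in (0:ℝ)..1, ((2 - 6*x*(1-x))/2)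
      = ∫ x in (0:ℝ)..1, (1 + (-3)*x + 3*x^2 + 0*x^3 + 0*x^4) := by
    apply intervalIntegral.integral_congr; intro x _; dsimp only; ring
  rw [e, poly_int]; norm_num

end AuxAnalysis

section AuxMeasure

noncomputable def f2 : ℝ × ℝ → ℝ := fun p => 2 - 3*|p.2 - p.1| - 6*p.1*(1 - p.1)

lemma f2_def (x y : ℝ) : f2 (x, y) = 2 - 3*|y - x| - 6*x*(1-x) := rfl

lemma f2_cont : Continuous f2 :=
  ((continuous_const.sub (continuous_const.mul
      ((continuous_snd.sub continuous_fst).abs))).sub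
    ((continuous_const.mul continuous_fst).mul (continuous_const.sub continuous_fst)))

lemma f2_meas : Measurable f2 := f2_cont.measurable

lemma mu_prob : IsProbabilityMeasure (volume.restrict (Icc (0:ℝ) 1)) :=
  ⟨by simp [Real.volume_Icc]⟩

lemma int_mu (g : ℝ → ℝ) :
    ∫ x, g x ∂(volume.restrict (Icc (0:ℝ) 1)) = ∫ x in (0:ℝ)..1, g x := by
  rw [intervalIntegral.integral_of_le zero_le_one]
  exact integral_Icc_eq_integral_Ioc

lemma integrable_aux {α : Type*} [MeasurableSpace α] [TopologicalSpace α] [OpensMeasurableSpace α]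
    (ν : Measure α) [IsFiniteMeasure ν] {s : Set α} (hs : IsCompact s)
    (hν : ∀ᵐ x ∂ν, x ∈ s) {g : α → ℝ} (hg : Continuous g) : Integrable g ν := by
  obtain ⟨C, hC⟩ := hs.exists_bound_of_continuousOn hg.continuousOn
  exact memLp_one_iff_integrable.mp
    (MemLp.of_bound hg.aestronglyMeasurable C (hν.mono fun x hx => hC x hx))

lemma ae_prod_mem :
    ∀ᵐ p ∂((volume.restrict (Icc (0:ℝ) 1)).prod (volume.restrict (Icc (0:ℝ) 1))),
      p ∈ (Icc (0:ℝ) 1) ×ˢ (Icc (0:ℝ) 1) := by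
  rw [Measure.prod_restrict]
  exact ae_restrict_mem (measurableSet_Icc.prod measurableSet_Icc)

lemma ae_trip_mem :
    ∀ᵐ r ∂(((volume.restrict (Icc (0:ℝ) 1)).prod (volume.restrict (Icc (0:ℝ) 1))).prod
        (volume.restrict (Icc (0:ℝ) 1))),
      r ∈ ((Icc (0:ℝ) 1) ×ˢ (Icc (0:ℝ) 1)) ×ˢ (Icc (0:ℝ) 1) := by
  rw [Measure.prod_restrict, Measure.prod_restrict]
  exact ae_restrict_mem ((measurableSet_Icc.prod measurableSet_Icc).prod measurableSet_Icc)

lemma M1 : ∫ p, f2 p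
    ∂((volume.restrict (Icc (0:ℝ) 1)).prod (volume.restrict (Icc (0:ℝ) 1))) = 0 := by
  set μ := volume.restrict (Icc (0:ℝ) 1) with hμ
  haveI : IsProbabilityMeasure μ := mu_prob
  have hint : Integrable f2 (μ.prod μ) :=
    integrable_aux _ (isCompact_Icc.prod isCompact_Icc) ae_prod_mem f2_cont
  rw [integral_prod _ hint]
  have h : ∫ x, (∫ y, f2 (x, y) ∂μ) ∂μ = ∫ x, (3*x^2 - 3*x + 1/2) ∂μ := by
    apply integral_congr_ae
    filter_upwards [ae_restrict_mem measurableSet_Icc] with x hx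
    rw [hμ, int_mu]
    simp only [f2_def]
    exact inner_snd hx
  rw [h, hμ, int_mu, outer_mean]

lemma M2 : ∫ p, f2 p * f2 p
    ∂((volume.restrict (Icc (0:ℝ) 1)).prod (volume.restrict (Icc (0:ℝ) 1))) = 1/2 := by
  set μ := volume.restrict (Icc (0:ℝ) 1) with hμ
  haveI : IsProbabilityMeasure μ := mu_prob
  have hint : Integrable (fun p => f2 p * f2 p) (μ.prod μ) :=
    integrable_aux _ (isCompact_Icc.prod isCompact_Icc) ae_prod_mem (f2_cont.mul f2_cont)
  rw [integral_prod _ hint]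
  have h : ∫ x, (∫ y, f2 (x, y) * f2 (x, y) ∂μ) ∂μ = ∫ x, ((2 - 6*x*(1-x))/2) ∂μ := by
    apply integral_congr_ae
    filter_upwards [ae_restrict_mem measurableSet_Icc] with x hx
    rw [hμ, int_mu]
    simp only [f2_def]
    rw [show (∫ y in (0:ℝ)..1, (2 - 3*|y - x| - 6*x*(1-x)) * (2 - 3*|y - x| - 6*x*(1-x)))
        = ∫ y in (0:ℝ)..1, (2 - 3*|y - x| - 6*x*(1-x))^2 by
      apply intervalIntegral.integral_congr; intro y _; dsimp only; ring]
    exact inner_sq hx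
  rw [h, hμ, int_mu, outer_sq]

lemma M3 : ∫ r, f2 r.1 * f2 (r.1.2, r.2)
    ∂(((volume.restrict (Icc (0:ℝ) 1)).prod (volume.restrict (Icc (0:ℝ) 1))).prod
      (volume.restrict (Icc (0:ℝ) 1))) = -(1/20) := by
  set μ := volume.restrict (Icc (0:ℝ) 1) with hμ
  haveI : IsProbabilityMeasure μ := mu_prob
  have hGc : Continuous fun r : (ℝ × ℝ) × ℝ => f2 r.1 * f2 (r.1.2, r.2) :=
    (f2_cont.comp continuous_fst).mul
      (f2_cont.comp (((continuous_snd.comp continuous_fst)).prodMk continuous_snd))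
  have hGint : Integrable (fun r : (ℝ × ℝ) × ℝ => f2 r.1 * f2 (r.1.2, r.2))
      ((μ.prod μ).prod μ) :=
    integrable_aux _ ((isCompact_Icc.prod isCompact_Icc).prod isCompact_Icc) ae_trip_mem hGc
  rw [integral_prod _ hGint]
  have h1 : ∫ p, (∫ z, f2 p * f2 (p.2, z) ∂μ) ∂(μ.prod μ)
      = ∫ p : ℝ × ℝ, f2 p * (3*p.2^2 - 3*p.2 + 1/2) ∂(μ.prod μ) := by
    apply integral_congr_ae
    filter_upwards [ae_prod_mem] with p hp
    rw [integral_const_mul, hμ, int_mu]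
    simp only [f2_def]
    rw [inner_snd hp.2]
  rw [h1]
  have hint2 : Integrable (fun p : ℝ × ℝ => f2 p * (3*p.2^2 - 3*p.2 + 1/2)) (μ.prod μ) := by
    apply integrable_aux _ (isCompact_Icc.prod isCompact_Icc) ae_prod_mem
    exact f2_cont.mul (by continuity)
  rw [integral_prod_symm _ hint2]
  have h2 : ∫ y, (∫ x, f2 (x, y) * (3*y^2 - 3*y + 1/2) ∂μ) ∂μ
      = ∫ y, (-(3*y^2 - 3*y + 1/2) * (3*y^2 - 3*y + 1/2)) ∂μ := by
    apply integral_congr_ae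
    filter_upwards [ae_restrict_mem measurableSet_Icc] with y hy
    rw [integral_mul_const, hμ, int_mu]
    simp only [f2_def]
    rw [inner_fst hy]
  rw [h2, hμ, int_mu, cov_int]

lemma f2_bound {x y : ℝ} (hx : x ∈ Icc (0:ℝ) 1) (hy : y ∈ Icc (0:ℝ) 1) :
    ‖f2 (x, y)‖ ≤ 7 := by
  obtain ⟨hx0, hx1⟩ := hx
  obtain ⟨hy0, hy1⟩ := hy
  have h1 : |y - x| ≤ 1 := abs_le.mpr ⟨by linarith, by linarith⟩
  have h2 : (0:ℝ) ≤ |y - x| := abs_nonneg _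
  rw [f2_def, Real.norm_eq_abs, abs_le]
  constructor <;> nlinarith

end AuxMeasure

section AuxSum

noncomputable def cc (i j : ℕ) : ℝ :=
  if i = j then 1/2 else if i + 1 = j ∨ j + 1 = i then -(1/20) else 0


lemma cc_diag (i : ℕ) : cc i i = 1/2 := by simp [cc]

lemma cc_succ (i : ℕ) : cc i (i+1) = -(1/20) := by
  unfold cc
  rw [if_neg (by omega : ¬ i = i + 1), if_pos (Or.inl rfl)]

lemma cc_succ' (i : ℕ) : cc (i+1) i = -(1/20) := by
  unfold cc
  rw [if_neg (by omega : ¬ i + 1 = i), if_pos (Or.inr rfl)]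

lemma cc_far {i j : ℕ} (h1 : ¬ i = j) (h2 : ¬ i + 1 = j) (h3 : ¬ j + 1 = i) : cc i j = 0 := by
  unfold cc
  rw [if_neg h1, if_neg (by tauto)]

lemma sum_cc (n : ℕ) :
    ∑ i ∈ Finset.range (n+1), ∑ j ∈ Finset.range (n+1), cc i j
      = ((n:ℝ)+1)/2 - (n:ℝ)/10 := by
  induction n with
  | zero => simp [cc]
  | succ m ih =>
    rw [Finset.sum_range_succ]
    have h1 : ∀ i ∈ Finset.range (m+1), ∑ j ∈ Finset.range (m+2), cc i j
        = (∑ j ∈ Finset.range (m+1), cc i j) + cc i (m+1) :=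
      fun i _ => Finset.sum_range_succ _ _
    rw [Finset.sum_congr rfl h1, Finset.sum_add_distrib, ih]
    have h2 : ∑ i ∈ Finset.range (m+1), cc i (m+1) = -(1/20) := by
      rw [Finset.sum_range_succ]
      have : ∑ i ∈ Finset.range m, cc i (m+1) = 0 := by
        apply Finset.sum_eq_zero
        intro i hi
        have him : i < m := Finset.mem_range.mp hi
        exact cc_far (by omega) (by omega) (by omega)
      rw [this, cc_succ m]
      ring
    have h3 : ∑ j ∈ Finset.range (m+2), cc (m+1) j = 1/2 - 1/20 := by
      rw [Finset.sum_range_succ, Finset.sum_range_succ]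
      have : ∑ j ∈ Finset.range m, cc (m+1) j = 0 := by
        apply Finset.sum_eq_zero
        intro j hj
        have hjm : j < m := Finset.mem_range.mp hj
        exact cc_far (by omega) (by omega) (by omega)
      rw [this, cc_succ' m, cc_diag]
      ring
    rw [h2, h3]
    push_cast
    ring

end AuxSum

/-- If `U 0, U 1, ..., U q` are i.i.d. uniform on `[0,1]` and
`W i = 2 - 3|U (i+1) - U i| - 6 U i (1 - U i)` for `0 ≤ i < q`, then
`Var((1/√q) ∑_{i<q} W i) = 2/5 + 1/(10 q)`. -/
theorem variance_block_sum
    {Ω : Type*} [MeasurableSpace Ω] (P : Measure Ω) [IsProbabilityMeasure P]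
    (q : ℕ) (hq : 1 ≤ q)
    (U : ℕ → Ω → ℝ) (hmeas : ∀ i, Measurable (U i))
    (hindep : iIndepFun U P)
    (hunif : ∀ i, Measure.map (U i) P = volume.restrict (Set.Icc (0:ℝ) 1)) :
    variance
      (fun ω => (Real.sqrt q)⁻¹ *
        ∑ i ∈ Finset.range q,
          (2 - 3 * |U (i+1) ω - U i ω| - 6 * U i ω * (1 - U i ω))) P
      = 2 / 5 + 1 / (10 * q) := by
  classical
  set μ := volume.restrict (Icc (0:ℝ) 1) with hμ
  haveI : IsProbabilityMeasure μ := mu_prob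
  -- the summands
  set W : ℕ → Ω → ℝ := fun i ω => f2 (U i ω, U (i+1) ω) with hW
  have hWm : ∀ i, Measurable (W i) := fun i =>
    f2_meas.comp ((hmeas i).prodMk (hmeas (i+1)))
  -- a.e. membership
  have haeU : ∀ i, ∀ᵐ ω ∂P, U i ω ∈ Icc (0:ℝ) 1 := by
    intro i
    have h : P ((U i) ⁻¹' (Icc (0:ℝ) 1)ᶜ) = 0 := by
      rw [← Measure.map_apply (hmeas i) measurableSet_Icc.compl, hunif i,
        Measure.restrict_apply measurableSet_Icc.compl]
      simp
    rw [ae_iff]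
    convert h using 2
    rfl
  -- W bound, integrability
  have haeW : ∀ i, ∀ᵐ ω ∂P, ‖W i ω‖ ≤ 7 := by
    intro i
    filter_upwards [haeU i, haeU (i+1)] with ω h1 h2
    exact f2_bound h1 h2
  have hWmem : ∀ i, MemLp (W i) 2 P := fun i =>
    MemLp.of_bound (hWm i).aestronglyMeasurable 7 (haeW i)
  have hWint : ∀ i, Integrable (W i) P := fun i => (hWmem i).integrable one_le_two
  have hWWint : ∀ i j, Integrable (fun ω => W i ω * W j ω) P := by
    intro i j
    apply memLp_one_iff_integrable.mp
    apply MemLp.of_bound ((hWm i).mul (hWm j)).aestronglyMeasurable 49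
    filter_upwards [haeW i, haeW j] with ω h1 h2
    rw [Real.norm_eq_abs, Pi.mul_apply, abs_mul]
    calc |W i ω| * |W j ω| ≤ 7 * 7 := by
          apply mul_le_mul (by simpa using h1) (by simpa using h2) (abs_nonneg _) (by norm_num)
      _ ≤ 49 := by norm_num
  -- joint laws
  have hpair : ∀ i, Measure.map (fun ω => (U i ω, U (i+1) ω)) P = μ.prod μ := by
    intro i
    have h : IndepFun (U i) (U (i+1)) P := hindep.indepFun (by omega)
    rw [(indepFun_iff_map_prod_eq_prod_map_map (hmeas i).aemeasurable
      (hmeas (i+1)).aemeasurable).mp h, hunif, hunif]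
  have htrip : ∀ i, Measure.map (fun ω => ((U i ω, U (i+1) ω), U (i+2) ω)) P
      = (μ.prod μ).prod μ := by
    intro i
    have h : IndepFun (fun ω => (U i ω, U (i+1) ω)) (U (i+2)) P :=
      hindep.indepFun_prodMk hmeas i (i+1) (i+2) (by omega) (by omega)
    rw [(indepFun_iff_map_prod_eq_prod_map_map
      ((hmeas i).prodMk (hmeas (i+1))).aemeasurable
      (hmeas (i+2)).aemeasurable).mp h, hpair i, hunif]
  -- moments
  have hEW : ∀ i, ∫ ω, W i ω ∂P = 0 := by
    intro i
    have h := integral_map (μ := P) ((hmeas i).prodMk (hmeas (i+1))).aemeasurable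
      (f := f2) f2_cont.aestronglyMeasurable
    rw [hpair i] at h
    rw [← h, M1]
  have hEWsq : ∀ i, ∫ ω, W i ω * W i ω ∂P = 1/2 := by
    intro i
    have h := integral_map (μ := P) ((hmeas i).prodMk (hmeas (i+1))).aemeasurable
      (f := fun p => f2 p * f2 p)
      (f2_cont.mul f2_cont).aestronglyMeasurable
    rw [hpair i] at h
    rw [← h, M2]
  have hcov : ∀ i, ∫ ω, W i ω * W (i+1) ω ∂P = -(1/20) := by
    intro i
    have hGc : Continuous fun r : (ℝ × ℝ) × ℝ => f2 r.1 * f2 (r.1.2, r.2) :=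
      (f2_cont.comp continuous_fst).mul
        (f2_cont.comp (((continuous_snd.comp continuous_fst)).prodMk continuous_snd))
    have h := integral_map (μ := P)
      (φ := fun ω => ((U i ω, U (i+1) ω), U (i+2) ω))
      (((hmeas i).prodMk (hmeas (i+1))).prodMk (hmeas (i+2))).aemeasurable
      (f := fun r : (ℝ × ℝ) × ℝ => f2 r.1 * f2 (r.1.2, r.2))
      hGc.aestronglyMeasurable
    rw [htrip i] at h
    rw [← M3, ← h]
  have hfar : ∀ i j, i + 2 ≤ j → ∫ ω, W i ω * W j ω ∂P = 0 := by
    intro i j hij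
    have hind : IndepFun (W i) (W j) P := by
      have h := hindep.indepFun_prodMk_prodMk hmeas i (i+1) j (j+1)
        (by omega) (by omega) (by omega) (by omega)
      exact h.comp f2_meas f2_meas
    have h := hind.integral_mul_eq_mul_integral (hWm i).aestronglyMeasurable (hWm j).aestronglyMeasurable
    have heq : ∫ ω, W i ω * W j ω ∂P = ∫ ω, (W i * W j) ω ∂P := rfl
    rw [heq, h, hEW i, hEW j, zero_mul]
  -- all products
  have hprod : ∀ i j, ∫ ω, W i ω * W j ω ∂P = cc i j := by
    intro i j
    rcases Nat.lt_trichotomy i j with hlt | heq | hgt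
    · rcases Nat.lt_or_ge (i+1) j with h2 | h2
      · rw [hfar i j (by omega), cc_far (by omega) (by omega) (by omega)]
      · have : j = i + 1 := by omega
        subst this
        rw [hcov i, cc_succ i]
    · subst heq
      rw [hEWsq i, cc_diag]
    · rcases Nat.lt_or_ge (j+1) i with h2 | h2
      · have : ∫ ω, W i ω * W j ω ∂P = ∫ ω, W j ω * W i ω ∂P := by
          congr 1; funext ω; ring
        rw [this, hfar j i (by omega), cc_far (by omega) (by omega) (by omega)]
      · have hji : i = j + 1 := by omega
        subst hji
        have : ∫ ω, W (j+1) ω * W j ω ∂P = ∫ ω, W j ω * W (j+1) ω ∂P := by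
          congr 1; funext ω; ring
        rw [this, hcov j, cc_succ' j]
  -- rewrite the variance
  set T : Ω → ℝ := fun ω => ∑ i ∈ Finset.range q, W i ω with hT
  have hrw : (fun ω => (Real.sqrt q)⁻¹ *
      ∑ i ∈ Finset.range q,
        (2 - 3 * |U (i+1) ω - U i ω| - 6 * U i ω * (1 - U i ω)))
      = fun ω => (Real.sqrt q)⁻¹ * T ω := rfl
  rw [hrw, variance_const_mul]
  have hTmem : MemLp T 2 P := by
    have h := memLp_finset_sum' (Finset.range q) (f := W) (fun i _ => hWmem i)
    convert h using 1
    funext ω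
    simp [hT]
  rw [variance_eq_sub hTmem]
  -- mean of T
  have hET : ∫ ω, T ω ∂P = 0 := by
    rw [hT]
    rw [integral_finset_sum _ (fun i _ => hWint i)]
    simp [hEW]
  -- second moment of T
  have hET2 : ∫ ω, (T ω)^2 ∂P = ((q:ℝ))/2 - ((q:ℝ) - 1)/10 := by
    have hsq : (fun ω => (T ω)^2)
        = fun ω => ∑ i ∈ Finset.range q, ∑ j ∈ Finset.range q, W i ω * W j ω := by
      funext ω
      rw [hT]
      dsimp only
      rw [sq, Finset.sum_mul_sum]
    rw [show ∫ ω, (T ω)^2 ∂P = ∫ ω, ∑ i ∈ Finset.range q, ∑ j ∈ Finset.range q,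
        W i ω * W j ω ∂P by rw [← hsq]]
    rw [integral_finset_sum _ (fun i _ => integrable_finset_sum _ (fun j _ => hWWint i j))]
    have : ∀ i ∈ Finset.range q, ∫ ω, ∑ j ∈ Finset.range q, W i ω * W j ω ∂P
        = ∑ j ∈ Finset.range q, cc i j := by
      intro i _
      rw [integral_finset_sum _ (fun j _ => hWWint i j)]
      exact Finset.sum_congr rfl (fun j _ => hprod i j)
    rw [Finset.sum_congr rfl this]
    obtain ⟨n, rfl⟩ : ∃ n, q = n + 1 := ⟨q - 1, by omega⟩
    rw [sum_cc n]
    push_cast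
    ring
  have hμX : P[T ^ 2] = ((q:ℝ))/2 - ((q:ℝ) - 1)/10 := by
    rw [← hET2]; rfl
  have hμT : P[T] = 0 := hET
  rw [hμX, hμT]
  have hc : ((Real.sqrt q)⁻¹)^2 = ((q:ℝ))⁻¹ := by
    rw [inv_pow, Real.sq_sqrt (by positivity)]
  rw [hc]
  have hq0 : (q:ℝ) ≠ 0 := by positivity
  field_simp
  ring
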